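/- Let B ∈ ℝ^{n×(m−p)}, C ∈ ℝ^{n×p}, x₀, x_goal ∈ ℝⁿ, ε ≥ 0, and define g(h) := ‖Cᵀh‖ − ‖Bᵀh‖ for unit vectors h ∈ ℝⁿ. If the maximum of g over the unit sphere is strictly negative, then there exists a time t_lim ≥ 0 such that for all t ≥ t_lim the target ball G = {x ∈ ℝⁿ : ‖x − x_goal‖ ≤ ε} is resiliently reachable at time t from x₀. -/

import Mathlib

open MeasureTheory Matrix

/-- Euclidean norm of a vector in `ℝ^k`. -/
noncomputable def eNorm {k : ℕ} (v : Fin k → ℝ) : ℝ := Real.sqrt (∑ i, (v i) ^ 2)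

/-- A square-integrable signal on `[0,T]` with `L²` norm at most `1`. -/
def Admissible {k : ℕ} (T : ℝ) (f : ℝ → Fin k → ℝ) : Prop :=
  Measurable f ∧ IntegrableOn (fun t => (eNorm (f t)) ^ 2) (Set.Ioc 0 T) ∧
    (∫ t in Set.Ioc (0 : ℝ) T, (eNorm (f t)) ^ 2) ≤ 1

/-- The target ball of center `xgoal` and radius `ε` is resiliently reachable at time `T`
from `x₀` for the driftless system `ẋ = Bu + Cw`. -/
def ResilientlyReachableAt {n q p : ℕ} (B : Matrix (Fin n) (Fin q) ℝ)
    (C : Matrix (Fin n) (Fin p) ℝ) (x₀ xgoal : Fin n → ℝ) (ε T : ℝ) : Prop :=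
  ∀ w : ℝ → Fin p → ℝ, Admissible T w →
    ∃ u : ℝ → Fin q → ℝ, Admissible T u ∧
      eNorm ((x₀ + ∫ t in Set.Ioc (0 : ℝ) T, (B.mulVec (u t) + C.mulVec (w t))) - xgoal) ≤ ε

/-! ### Auxiliary facts about `eNorm` -/

lemma eNorm_nonneg' {k : ℕ} (v : Fin k → ℝ) : 0 ≤ eNorm v := Real.sqrt_nonneg _

lemma sq_eNorm' {k : ℕ} (v : Fin k → ℝ) : eNorm v ^ 2 = ∑ i, (v i) ^ 2 :=
  Real.sq_sqrt (Finset.sum_nonneg fun _ _ => sq_nonneg _)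

lemma eNorm_zero' {k : ℕ} : eNorm (0 : Fin k → ℝ) = 0 := by simp [eNorm]

lemma abs_le_eNorm' {k : ℕ} (v : Fin k → ℝ) (i : Fin k) : |v i| ≤ eNorm v := by
  rw [← Real.sqrt_sq_eq_abs]
  exact Real.sqrt_le_sqrt (Finset.single_le_sum (fun j _ => sq_nonneg (v j)) (Finset.mem_univ i))

lemma eNorm_smul' {k : ℕ} (s : ℝ) (v : Fin k → ℝ) : eNorm (s • v) = |s| * eNorm v := by
  have : ∑ i, (s * v i) ^ 2 = s ^ 2 * ∑ i, (v i) ^ 2 := by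
    rw [Finset.mul_sum]; exact Finset.sum_congr rfl fun i _ => by ring
  simp only [eNorm, Pi.smul_apply, smul_eq_mul, this, Real.sqrt_mul (sq_nonneg s),
    Real.sqrt_sq_eq_abs]

lemma dot_le_eNorm' {k : ℕ} (v w : Fin k → ℝ) : ∑ i, v i * w i ≤ eNorm v * eNorm w := by
  have h := Finset.sum_mul_sq_le_sq_mul_sq Finset.univ v w
  have h2 : eNorm v * eNorm w = Real.sqrt ((∑ i, v i ^ 2) * (∑ i, w i ^ 2)) := by
    rw [eNorm, eNorm, ← Real.sqrt_mul (Finset.sum_nonneg fun _ _ => sq_nonneg _)]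
  calc ∑ i, v i * w i ≤ |∑ i, v i * w i| := le_abs_self _
    _ = Real.sqrt ((∑ i, v i * w i) ^ 2) := (Real.sqrt_sq_eq_abs _).symm
    _ ≤ eNorm v * eNorm w := by rw [h2]; exact Real.sqrt_le_sqrt h

lemma eNorm_add_le' {k : ℕ} (v w : Fin k → ℝ) : eNorm (v + w) ≤ eNorm v + eNorm w := by
  have h1 : eNorm (v + w) ^ 2 ≤ (eNorm v + eNorm w) ^ 2 := by
    rw [sq_eNorm']
    have : ∑ i, (v i + w i) ^ 2 = (∑ i, v i ^ 2) + 2 * (∑ i, v i * w i) + ∑ i, w i ^ 2 := by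
      rw [Finset.mul_sum, ← Finset.sum_add_distrib, ← Finset.sum_add_distrib]
      exact Finset.sum_congr rfl fun i _ => by ring
    have hd := dot_le_eNorm' v w
    simp only [Pi.add_apply, this]
    rw [← sq_eNorm', ← sq_eNorm']
    nlinarith [eNorm_nonneg' v, eNorm_nonneg' w]
  nlinarith [eNorm_nonneg' (v + w), eNorm_nonneg' v, eNorm_nonneg' w]

lemma continuous_eNorm' {k : ℕ} : Continuous (eNorm (k := k)) :=
  Real.continuous_sqrt.comp (continuous_finset_sum _ fun i _ => (continuous_apply i).pow 2)

lemma eNorm_pos' {k : ℕ} {v : Fin k → ℝ} (hv : v ≠ 0) : 0 < eNorm v := by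
  rcases Function.ne_iff.1 hv with ⟨i, hi⟩
  exact lt_of_lt_of_le (abs_pos.2 hi) (abs_le_eNorm' v i)

/-! ### The key surjectivity lemma (convex duality via hyperplane separation) -/

lemma exists_preimage' {n q p : ℕ} (B : Matrix (Fin n) (Fin q) ℝ) (C : Matrix (Fin n) (Fin p) ℝ)
    {cst : ℝ} (hB : ∀ h : Fin n → ℝ, eNorm (Cᵀ.mulVec h) + cst * eNorm h ≤ eNorm (Bᵀ.mulVec h))
    (y : Fin p → ℝ) (e : Fin n → ℝ) (hy : eNorm y ≤ 1) (he : eNorm e ≤ cst) :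
    ∃ z : Fin q → ℝ, eNorm z ≤ 1 ∧ B.mulVec z = C.mulVec y + e := by
  by_contra hcon
  push_neg at hcon
  set v : Fin n → ℝ := C.mulVec y + e with hv
  set S : Set (Fin q → ℝ) := {z | eNorm z ≤ 1} with hS
  set K : Set (Fin n → ℝ) := B.mulVec '' S with hK
  have hSconv : Convex ℝ S := by
    intro a ha b hb s t hs ht hst
    have h1 : eNorm (s • a + t • b) ≤ |s| * eNorm a + |t| * eNorm b := by
      calc eNorm (s • a + t • b) ≤ eNorm (s • a) + eNorm (t • b) := eNorm_add_le' _ _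
        _ = |s| * eNorm a + |t| * eNorm b := by rw [eNorm_smul', eNorm_smul']
    have h2a : |s| * eNorm a ≤ |s| := by
      have := mul_le_mul_of_nonneg_left ha (abs_nonneg s); simpa using this
    have h2b : |t| * eNorm b ≤ |t| := by
      have := mul_le_mul_of_nonneg_left hb (abs_nonneg t); simpa using this
    have : |s| * eNorm a + |t| * eNorm b ≤ |s| + |t| := add_le_add h2a h2b
    simp only [hS, Set.mem_setOf_eq] at *
    calc eNorm (s • a + t • b) ≤ |s| + |t| := le_trans h1 this
      _ = 1 := by rw [abs_of_nonneg hs, abs_of_nonneg ht, hst]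
  have hKconv : Convex ℝ K := hSconv.linear_image B.mulVecLin
  have hScomp : IsCompact S := by
    have hclosed : IsClosed S := isClosed_le continuous_eNorm' continuous_const
    have hsub : S ⊆ Metric.closedBall 0 1 := by
      intro z hz
      rw [Metric.mem_closedBall, dist_zero_right]
      refine (pi_norm_le_iff_of_nonneg zero_le_one).2 fun i => ?_
      exact le_trans (abs_le_eNorm' z i) hz
    exact (isCompact_closedBall (0 : Fin q → ℝ) 1).of_isClosed_subset hclosed hsub
  have hKcomp : IsCompact K :=
    hScomp.image B.mulVecLin.continuous_of_finiteDimensional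
  have hvK : v ∉ K := by
    rintro ⟨z, hz, hzeq⟩
    exact hcon z hz hzeq
  obtain ⟨f, u, hfK, hfv⟩ := geometric_hahn_banach_closed_point hKconv hKcomp.isClosed hvK
  set h : Fin n → ℝ := fun i => f (Pi.single i 1) with hh
  have hfx : ∀ x : Fin n → ℝ, f x = ∑ i, h i * x i := by
    intro x
    have hx : x = ∑ i, (x i) • (Pi.single i 1 : Fin n → ℝ) := by
      funext j
      simp [Pi.single_apply, Finset.sum_ite_eq', mul_comm]
    conv_lhs => rw [hx]
    rw [map_sum]
    exact Finset.sum_congr rfl fun i _ => by rw [f.map_smul]; simp [hh, mul_comm]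
  have hmem0 : (0 : Fin n → ℝ) ∈ K := ⟨0, by simp [hS, eNorm_zero'], by simp⟩
  have h0u : (0:ℝ) < u := by simpa using hfK 0 hmem0
  have hdot : ∀ z : Fin q → ℝ, f (B.mulVec z) = ∑ j, (Bᵀ.mulVec h) j * z j := by
    intro z
    rw [hfx]
    have : ∑ i, h i * B.mulVec z i = h ⬝ᵥ B.mulVec z := rfl
    rw [this, Matrix.dotProduct_mulVec, ← Matrix.mulVec_transpose]
    rfl
  have hBu : eNorm (Bᵀ.mulVec h) < u := by
    rcases eq_or_ne (Bᵀ.mulVec h) 0 with h' | h'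
    · rw [h', eNorm_zero']; exact h0u
    · set a := Bᵀ.mulVec h with ha
      have hapos : 0 < eNorm a := eNorm_pos' h'
      set z : Fin q → ℝ := (eNorm a)⁻¹ • a with hz
      have hz1 : eNorm z = 1 := by
        rw [hz, eNorm_smul', abs_of_nonneg (inv_nonneg.2 hapos.le), inv_mul_cancel₀ hapos.ne']
      have hmem : B.mulVec z ∈ K := ⟨z, le_of_eq hz1, rfl⟩
      have := hfK _ hmem
      rw [hdot] at this
      have hsum : ∑ j, a j * z j = (eNorm a)⁻¹ * ∑ j, a j * a j := by
        rw [Finset.mul_sum]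
        exact Finset.sum_congr rfl fun j _ => by simp [hz]; ring
      rw [hsum] at this
      have hsq : ∑ j, a j * a j = eNorm a ^ 2 := by
        rw [sq_eNorm']; exact Finset.sum_congr rfl fun j _ => by ring
      rw [hsq] at this
      calc eNorm a = (eNorm a)⁻¹ * eNorm a ^ 2 := by field_simp
        _ < u := this
  have hfvle : f v ≤ eNorm (Cᵀ.mulVec h) + cst * eNorm h := by
    rw [hfx, hv]
    have hsplit : ∑ i, h i * (C.mulVec y + e) i
        = (∑ j, (Cᵀ.mulVec h) j * y j) + ∑ i, h i * e i := by
      have h1 : ∑ i, h i * (C.mulVec y + e) i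
          = (∑ i, h i * C.mulVec y i) + ∑ i, h i * e i := by
        rw [← Finset.sum_add_distrib]
        exact Finset.sum_congr rfl fun i _ => by simp [mul_add]
      rw [h1]
      congr 1
      have : ∑ i, h i * C.mulVec y i = h ⬝ᵥ C.mulVec y := rfl
      rw [this, Matrix.dotProduct_mulVec, ← Matrix.mulVec_transpose]
      rfl
    rw [hsplit]
    have h1 : ∑ j, (Cᵀ.mulVec h) j * y j ≤ eNorm (Cᵀ.mulVec h) := by
      calc ∑ j, (Cᵀ.mulVec h) j * y j ≤ eNorm (Cᵀ.mulVec h) * eNorm y := dot_le_eNorm' _ _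
        _ ≤ eNorm (Cᵀ.mulVec h) * 1 := mul_le_mul_of_nonneg_left hy (eNorm_nonneg' _)
        _ = _ := mul_one _
    have h2 : ∑ i, h i * e i ≤ cst * eNorm h := by
      calc ∑ i, h i * e i ≤ eNorm h * eNorm e := dot_le_eNorm' _ _
        _ ≤ eNorm h * cst := mul_le_mul_of_nonneg_left he (eNorm_nonneg' _)
        _ = cst * eNorm h := mul_comm _ _
    linarith
  linarith [hB h, hfv]

/-! ### The compactness constant -/

lemma exists_cst' {n q p : ℕ} (hn : n ≠ 0) (B : Matrix (Fin n) (Fin q) ℝ)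
    (C : Matrix (Fin n) (Fin p) ℝ)
    (hg : ∀ h : Fin n → ℝ, eNorm h = 1 →
      eNorm (Cᵀ.mulVec h) - eNorm (Bᵀ.mulVec h) < 0) :
    ∃ cst : ℝ, 0 < cst ∧
      ∀ h : Fin n → ℝ, eNorm (Cᵀ.mulVec h) + cst * eNorm h ≤ eNorm (Bᵀ.mulVec h) := by
  haveI : NeZero n := ⟨hn⟩
  set S1 : Set (Fin n → ℝ) := {h | eNorm h = 1} with hS1
  have hclosed : IsClosed S1 := isClosed_eq continuous_eNorm' continuous_const
  have hsub : S1 ⊆ Metric.closedBall 0 1 := by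
    intro z hz
    rw [Metric.mem_closedBall, dist_zero_right]
    exact (pi_norm_le_iff_of_nonneg zero_le_one).2 fun i => le_of_le_of_eq (abs_le_eNorm' z i) hz
  have hcomp : IsCompact S1 :=
    (isCompact_closedBall (0 : Fin n → ℝ) 1).of_isClosed_subset hclosed hsub
  have hne : S1.Nonempty := by
    refine ⟨Pi.single (0 : Fin n) (1 : ℝ), ?_⟩
    have hsum : ∑ i, ((Pi.single (0 : Fin n) (1:ℝ) : Fin n → ℝ) i) ^ 2 = 1 := by
      rw [Finset.sum_eq_single 0]
      · simp
      · intro b _ hb; simp [Pi.single_apply, hb]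
      · simp
    simp only [hS1, Set.mem_setOf_eq, eNorm, hsum, Real.sqrt_one]
  have cmulB : Continuous fun h : Fin n → ℝ => Bᵀ.mulVec h :=
    Bᵀ.mulVecLin.continuous_of_finiteDimensional.congr fun h => Bᵀ.mulVecLin_apply h
  have cmulC : Continuous fun h : Fin n → ℝ => Cᵀ.mulVec h :=
    Cᵀ.mulVecLin.continuous_of_finiteDimensional.congr fun h => Cᵀ.mulVecLin_apply h
  have hcont : Continuous fun h : Fin n → ℝ => eNorm (Bᵀ.mulVec h) - eNorm (Cᵀ.mulVec h) :=
    (continuous_eNorm'.comp cmulB).sub (continuous_eNorm'.comp cmulC)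
  obtain ⟨h₀, h₀S, hmin⟩ := hcomp.exists_isMinOn hne hcont.continuousOn
  set cst : ℝ := eNorm (Bᵀ.mulVec h₀) - eNorm (Cᵀ.mulVec h₀) with hcstdef
  have hcst : 0 < cst := by
    have := hg h₀ h₀S
    simp only [hcstdef]; linarith
  refine ⟨cst, hcst, fun h => ?_⟩
  rcases eq_or_ne h 0 with rfl | hh
  · simp [eNorm_zero', Matrix.mulVec_zero]
  · have hr : 0 < eNorm h := eNorm_pos' hh
    set h' : Fin n → ℝ := (eNorm h)⁻¹ • h with hh'
    have hh'1 : eNorm h' = 1 := by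
      rw [hh', eNorm_smul', abs_of_nonneg (inv_nonneg.2 hr.le), inv_mul_cancel₀ hr.ne']
    have hmem : h' ∈ S1 := hh'1
    have hle := hmin hmem
    simp only [Set.mem_setOf_eq] at hle
    have hB' : eNorm (Bᵀ.mulVec h') = (eNorm h)⁻¹ * eNorm (Bᵀ.mulVec h) := by
      rw [hh', Matrix.mulVec_smul, eNorm_smul', abs_of_nonneg (inv_nonneg.2 hr.le)]
    have hC' : eNorm (Cᵀ.mulVec h') = (eNorm h)⁻¹ * eNorm (Cᵀ.mulVec h) := by
      rw [hh', Matrix.mulVec_smul, eNorm_smul', abs_of_nonneg (inv_nonneg.2 hr.le)]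
    have hle2 : cst ≤ (eNorm h)⁻¹ * eNorm (Bᵀ.mulVec h) - (eNorm h)⁻¹ * eNorm (Cᵀ.mulVec h) := by
      have : cst ≤ eNorm (Bᵀ.mulVec h') - eNorm (Cᵀ.mulVec h') := hle
      rwa [hB', hC'] at this
    have key : eNorm h * cst ≤ eNorm (Bᵀ.mulVec h) - eNorm (Cᵀ.mulVec h) := by
      calc eNorm h * cst
          ≤ eNorm h * ((eNorm h)⁻¹ * eNorm (Bᵀ.mulVec h) - (eNorm h)⁻¹ * eNorm (Cᵀ.mulVec h)) :=
            mul_le_mul_of_nonneg_left hle2 hr.le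
        _ = eNorm (Bᵀ.mulVec h) - eNorm (Cᵀ.mulVec h) := by field_simp
    nlinarith [key]

/-! ### Cauchy–Schwarz for integrals -/

lemma integral_sq_le_CS' {T : ℝ} (hT : 0 ≤ T) {f : ℝ → ℝ} (hm : Measurable f)
    (hsq : IntegrableOn (fun t => f t ^ 2) (Set.Ioc 0 T)) :
    (∫ t in Set.Ioc (0:ℝ) T, f t) ^ 2 ≤ T * ∫ t in Set.Ioc (0:ℝ) T, f t ^ 2 := by
  set μ := volume.restrict (Set.Ioc (0:ℝ) T) with hμ
  have hmem : MemLp f 2 μ :=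
    (memLp_two_iff_integrable_sq hm.aestronglyMeasurable).2 hsq
  have hmema : MemLp (fun t => |f t|) 2 μ := by simpa using hmem.norm
  have hpq : Real.HolderConjugate 2 2 := Real.HolderConjugate.two_two
  have hone : MemLp (fun _ : ℝ => (1:ℝ)) 2 μ := memLp_const 1
  have h2 : ENNReal.ofReal (2:ℝ) = 2 := by norm_num
  have key := integral_mul_le_Lp_mul_Lq_of_nonneg hpq
    (f := fun t => |f t|) (g := fun _ => (1:ℝ))
    (Filter.Eventually.of_forall fun t => abs_nonneg _)
    (Filter.Eventually.of_forall fun t => zero_le_one)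
    (by rwa [h2]) (by rwa [h2])
  simp only [mul_one] at key
  have hrpow : ∀ x : ℝ, x ^ (2:ℝ) = x ^ (2:ℕ) := fun x => by
    rw [show (2:ℝ) = ((2:ℕ):ℝ) by norm_num, Real.rpow_natCast]
  have hμuniv : (μ Set.univ).toReal = T := by
    simp [hμ, Real.volume_Ioc, ENNReal.toReal_ofReal hT]
  have hint1 : (∫ _ : ℝ, (1:ℝ)^(2:ℝ) ∂μ) = T := by
    simp only [Real.one_rpow]
    rw [integral_const, smul_eq_mul, mul_one, measureReal_def, hμuniv]
  rw [hint1] at key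
  have habs2 : (∫ t, |f t| ^ (2:ℝ) ∂μ) = ∫ t, f t ^ 2 ∂μ := by
    congr 1; funext t; rw [hrpow, sq_abs]
  rw [habs2] at key
  have hA : 0 ≤ ∫ t, f t ^ 2 ∂μ := integral_nonneg fun t => sq_nonneg _
  have hintabs : |∫ t, f t ∂μ| ≤ ∫ t, |f t| ∂μ := by
    simpa using norm_integral_le_integral_norm (f := f) (μ := μ)
  have hrw : ((∫ t, f t ^ 2 ∂μ) ^ ((1:ℝ)/2)) * (T ^ ((1:ℝ)/2))
      = Real.sqrt (∫ t, f t ^ 2 ∂μ) * Real.sqrt T := by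
    rw [Real.sqrt_eq_rpow, Real.sqrt_eq_rpow]
  rw [hrw] at key
  calc (∫ t, f t ∂μ) ^ 2 = |∫ t, f t ∂μ| ^ 2 := (sq_abs _).symm
    _ ≤ (∫ t, |f t| ∂μ) ^ 2 := pow_le_pow_left₀ (abs_nonneg _) hintabs 2
    _ ≤ (Real.sqrt (∫ t, f t ^ 2 ∂μ) * Real.sqrt T) ^ 2 := by
        have h0 : 0 ≤ ∫ t, |f t| ∂μ := integral_nonneg fun t => abs_nonneg _
        exact pow_le_pow_left₀ h0 key 2
    _ = (∫ t, f t ^ 2 ∂μ) * T := by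
        rw [mul_pow, Real.sq_sqrt hA, Real.sq_sqrt hT]
    _ = T * ∫ t, f t ^ 2 ∂μ := mul_comm _ _

theorem resiliently_reachable_of_g_neg {n m p : ℕ} (B : Matrix (Fin n) (Fin (m - p)) ℝ)
    (C : Matrix (Fin n) (Fin p) ℝ) (x₀ xgoal : Fin n → ℝ) (ε : ℝ) (hε : 0 ≤ ε)
    (hg : ∀ h : Fin n → ℝ, eNorm h = 1 →
      eNorm (Cᵀ.mulVec h) - eNorm (Bᵀ.mulVec h) < 0) :
    ∃ tlim : ℝ, 0 ≤ tlim ∧ ∀ t : ℝ, tlim ≤ t →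
      ResilientlyReachableAt B C x₀ xgoal ε t := by
  rcases Nat.eq_zero_or_pos n with hn | hn
  · subst hn
    refine ⟨0, le_refl 0, fun T _ w _ => ?_⟩
    refine ⟨fun _ => 0, ⟨measurable_const, ?_, ?_⟩, ?_⟩
    · have heq : (fun t : ℝ => eNorm ((fun _ : ℝ => (0 : Fin (m-p) → ℝ)) t) ^ 2)
          = fun _ : ℝ => (0:ℝ) := by funext t; simp [eNorm_zero']
      rw [heq]
      exact integrableOn_const measure_Ioc_lt_top.ne
    · simp [eNorm_zero']
    · simpa [eNorm] using hε
  · obtain ⟨cst, hcst, hB⟩ := exists_cst' hn.ne' B C hg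
    refine ⟨max 1 ((eNorm (xgoal - x₀)) / cst)^2, le_trans zero_le_one ?_, fun T hT => ?_⟩
    · calc (1:ℝ) ≤ max 1 ((eNorm (xgoal - x₀)) / cst) := le_max_left _ _
        _ ≤ (max 1 ((eNorm (xgoal - x₀)) / cst))^2 := by
            nlinarith [le_max_left (1:ℝ) ((eNorm (xgoal - x₀)) / cst)]
    · have hT1 : 1 ≤ T := by
        have : (1:ℝ) ≤ (max 1 ((eNorm (xgoal - x₀)) / cst))^2 := by
          nlinarith [le_max_left (1:ℝ) ((eNorm (xgoal - x₀)) / cst)]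
        linarith
      have hT0 : 0 < T := lt_of_lt_of_le zero_lt_one hT1
      set s := Real.sqrt T with hs
      have hs0 : 0 < s := Real.sqrt_pos.2 hT0
      have hsd : eNorm (xgoal - x₀) ≤ cst * s := by
        have h1 : ((eNorm (xgoal - x₀)) / cst)^2 ≤ T := by
          have := le_max_right (1:ℝ) ((eNorm (xgoal - x₀)) / cst)
          nlinarith [le_max_right (1:ℝ) ((eNorm (xgoal - x₀)) / cst),
            div_nonneg (eNorm_nonneg' (xgoal - x₀)) hcst.le, hT]
        have h2 : eNorm (xgoal - x₀) / cst ≤ s := by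
          have := Real.sqrt_le_sqrt h1
          rwa [Real.sqrt_sq (div_nonneg (eNorm_nonneg' (xgoal - x₀)) hcst.le)] at this
        calc eNorm (xgoal - x₀) = (eNorm (xgoal - x₀) / cst) * cst := by field_simp
          _ ≤ s * cst := mul_le_mul_of_nonneg_right h2 hcst.le
          _ = cst * s := mul_comm _ _
      intro w hw
      obtain ⟨hwm, hwint, hwle⟩ := hw
      have hmi : ∀ i, Measurable fun t => w t i := fun i => (measurable_pi_apply i).comp hwm
      have habs : ∀ t i, |w t i| ≤ eNorm (w t) := fun t i => abs_le_eNorm' _ i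
      have hbound : ∀ t, eNorm (w t) ≤ 1 + eNorm (w t)^2 := fun t => by
        nlinarith [eNorm_nonneg' (w t)]
      have hgint : IntegrableOn (fun t => 1 + eNorm (w t)^2) (Set.Ioc (0:ℝ) T) :=
        (integrableOn_const measure_Ioc_lt_top.ne).add hwint
      have hint1 : ∀ i, IntegrableOn (fun t => w t i) (Set.Ioc (0:ℝ) T) := fun i =>
        Integrable.mono' hgint (hmi i).aestronglyMeasurable
          (Filter.Eventually.of_forall fun t => by
            have h1 := habs t i; have h2 := hbound t
            simp only [Real.norm_eq_abs]; linarith)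
      have hintsq : ∀ i, IntegrableOn (fun t => (w t i)^2) (Set.Ioc (0:ℝ) T) := fun i =>
        Integrable.mono' hwint ((hmi i).pow_const 2).aestronglyMeasurable
          (Filter.Eventually.of_forall fun t => by
            have h1 := habs t i
            have h3 : (w t i)^2 ≤ eNorm (w t)^2 := by
              rw [← sq_abs (w t i)]
              exact pow_le_pow_left₀ (abs_nonneg _) h1 2
            have h4 : (0:ℝ) ≤ (w t i)^2 := sq_nonneg _
            rw [Real.norm_eq_abs, abs_of_nonneg h4]
            exact h3)
      set W : Fin p → ℝ := fun i => ∫ t in Set.Ioc (0:ℝ) T, w t i with hW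
      have hWle : eNorm W ≤ s := by
        have hsum : ∑ i, (W i)^2 ≤ T := by
          have hCS : ∀ i, (W i)^2 ≤ T * ∫ t in Set.Ioc (0:ℝ) T, (w t i)^2 := fun i =>
            integral_sq_le_CS' hT0.le (hmi i) (hintsq i)
          calc ∑ i, (W i)^2 ≤ ∑ i, T * ∫ t in Set.Ioc (0:ℝ) T, (w t i)^2 :=
              Finset.sum_le_sum fun i _ => hCS i
            _ = T * ∑ i, ∫ t in Set.Ioc (0:ℝ) T, (w t i)^2 := by rw [Finset.mul_sum]
            _ = T * ∫ t in Set.Ioc (0:ℝ) T, ∑ i, (w t i)^2 := by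
                rw [← integral_finset_sum _ fun i _ => hintsq i]
            _ = T * ∫ t in Set.Ioc (0:ℝ) T, eNorm (w t)^2 := by
                congr 1
                exact integral_congr_ae (Filter.Eventually.of_forall fun t => (sq_eNorm' _).symm)
            _ ≤ T * 1 := mul_le_mul_of_nonneg_left hwle hT0.le
            _ = T := mul_one T
        calc eNorm W = Real.sqrt (∑ i, (W i)^2) := rfl
          _ ≤ Real.sqrt T := Real.sqrt_le_sqrt hsum
          _ = s := rfl
      set y : Fin p → ℝ := (-(s⁻¹)) • W with hy0
      set ev : Fin n → ℝ := s⁻¹ • (xgoal - x₀) with hev0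
      have hy : eNorm y ≤ 1 := by
        rw [hy0, eNorm_smul', abs_neg, abs_of_nonneg (inv_nonneg.2 hs0.le)]
        calc s⁻¹ * eNorm W ≤ s⁻¹ * s := mul_le_mul_of_nonneg_left hWle (inv_nonneg.2 hs0.le)
          _ = 1 := inv_mul_cancel₀ hs0.ne'
      have he : eNorm ev ≤ cst := by
        rw [hev0, eNorm_smul', abs_of_nonneg (inv_nonneg.2 hs0.le)]
        calc s⁻¹ * eNorm (xgoal - x₀) ≤ s⁻¹ * (cst * s) :=
            mul_le_mul_of_nonneg_left hsd (inv_nonneg.2 hs0.le)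
          _ = cst := by field_simp
      obtain ⟨z', hz'1, hz'eq⟩ := exists_preimage' B C hB y ev hy he
      set z : Fin (m - p) → ℝ := s • z' with hz0
      have hze : eNorm z ≤ s := by
        rw [hz0, eNorm_smul', abs_of_nonneg hs0.le]
        calc s * eNorm z' ≤ s * 1 := mul_le_mul_of_nonneg_left hz'1 hs0.le
          _ = s := mul_one s
      have hBz : B.mulVec z = -(C.mulVec W) + (xgoal - x₀) := by
        rw [hz0, Matrix.mulVec_smul, hz'eq, smul_add]
        congr 1
        · rw [hy0, ← Matrix.mulVec_smul, smul_smul]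
          have h1 : s * (-(s⁻¹)) = -1 := by field_simp
          rw [h1, neg_one_smul, Matrix.mulVec_neg]
        · rw [hev0, smul_smul, mul_inv_cancel₀ hs0.ne', one_smul]
      refine ⟨fun _ => T⁻¹ • z, ⟨measurable_const, ?_, ?_⟩, ?_⟩
      · exact integrableOn_const measure_Ioc_lt_top.ne
      · have hvol : (volume (Set.Ioc (0:ℝ) T)).toReal = T := by
          simp [Real.volume_Ioc, ENNReal.toReal_ofReal hT0.le]
        have : (∫ _ in Set.Ioc (0:ℝ) T, eNorm (T⁻¹ • z) ^ 2) = T * eNorm (T⁻¹ • z)^2 := by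
          rw [setIntegral_const, measureReal_def, hvol, smul_eq_mul]
        rw [this]
        have hz2 : eNorm z ^ 2 ≤ T := by
          have := pow_le_pow_left₀ (eNorm_nonneg' z) hze 2
          rwa [hs, Real.sq_sqrt hT0.le] at this
        have heq : T * eNorm (T⁻¹ • z)^2 = eNorm z ^2 / T := by
          rw [eNorm_smul', abs_of_nonneg (inv_nonneg.2 hT0.le)]
          field_simp
        rw [heq]
        exact (div_le_one hT0).2 hz2
      · -- the integral computation
        have hvol : (volume (Set.Ioc (0:ℝ) T)).toReal = T := by
          simp [Real.volume_Ioc, ENNReal.toReal_ofReal hT0.le]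
        set M : ℝ := ∑ i, ∑ k, |C i k| with hM
        have hMnn : 0 ≤ M := Finset.sum_nonneg fun i _ => Finset.sum_nonneg fun k _ => abs_nonneg _
        have hCx : ∀ x : Fin p → ℝ, ‖C.mulVec x‖ ≤ M * eNorm x := by
          intro x
          refine (pi_norm_le_iff_of_nonneg (mul_nonneg hMnn (eNorm_nonneg' x))).2 fun i => ?_
          have h1 : |(C.mulVec x) i| ≤ ∑ k, |C i k| * |x k| := by
            calc |(C.mulVec x) i| = |∑ k, C i k * x k| := rfl
              _ ≤ ∑ k, |C i k * x k| := Finset.abs_sum_le_sum_abs _ _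
              _ = ∑ k, |C i k| * |x k| := Finset.sum_congr rfl fun k _ => abs_mul _ _
          have h2 : ∑ k, |C i k| * |x k| ≤ ∑ k, |C i k| * eNorm x :=
            Finset.sum_le_sum fun k _ =>
              mul_le_mul_of_nonneg_left (abs_le_eNorm' x k) (abs_nonneg _)
          have h3 : (∑ k, |C i k|) * eNorm x ≤ M * eNorm x := by
            refine mul_le_mul_of_nonneg_right ?_ (eNorm_nonneg' x)
            exact Finset.single_le_sum (f := fun i => ∑ k, |C i k|)
              (fun j _ => Finset.sum_nonneg fun k _ => abs_nonneg _) (Finset.mem_univ i)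
          rw [Real.norm_eq_abs]
          calc |(C.mulVec x) i| ≤ ∑ k, |C i k| * eNorm x := le_trans h1 h2
            _ = (∑ k, |C i k|) * eNorm x := (Finset.sum_mul _ _ _).symm
            _ ≤ M * eNorm x := h3
        have hCw_meas : Measurable fun t => C.mulVec (w t) :=
          ((C.mulVecLin.continuous_of_finiteDimensional.congr
            fun v => C.mulVecLin_apply v).measurable).comp hwm
        have hCw_int : IntegrableOn (fun t => C.mulVec (w t)) (Set.Ioc (0:ℝ) T) := by
          refine Integrable.mono' (hgint.const_mul M)
            hCw_meas.aestronglyMeasurable (Filter.Eventually.of_forall fun t => ?_)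
          calc ‖C.mulVec (w t)‖ ≤ M * eNorm (w t) := hCx _
            _ ≤ M * (1 + eNorm (w t)^2) := mul_le_mul_of_nonneg_left (hbound t) hMnn
        have hFint : IntegrableOn
            (fun t => B.mulVec (T⁻¹ • z) + C.mulVec (w t)) (Set.Ioc (0:ℝ) T) :=
          (integrableOn_const measure_Ioc_lt_top.ne).add hCw_int
        have key : (∫ t in Set.Ioc (0:ℝ) T, (B.mulVec (T⁻¹ • z) + C.mulVec (w t)))
            = xgoal - x₀ := by
          funext i
          have hproj := (ContinuousLinearMap.proj (R := ℝ) (φ := fun _ : Fin n => ℝ) i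
            ).integral_comp_comm hFint
          have h1 : (∫ t in Set.Ioc (0:ℝ) T, (B.mulVec (T⁻¹ • z) + C.mulVec (w t))) i
              = ∫ t in Set.Ioc (0:ℝ) T, (B.mulVec (T⁻¹ • z) i + C.mulVec (w t) i) :=
            hproj.symm
          have hsum_eq : (fun t => C.mulVec (w t) i) = fun t => ∑ k, C i k * w t k := rfl
          have hintg : IntegrableOn (fun t => C.mulVec (w t) i) (Set.Ioc (0:ℝ) T) := by
            rw [hsum_eq]
            exact integrable_finset_sum _ fun k _ => (hint1 k).const_mul (C i k)
          have h2 : (∫ t in Set.Ioc (0:ℝ) T, (B.mulVec (T⁻¹ • z) i + C.mulVec (w t) i))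
              = T * (B.mulVec (T⁻¹ • z) i) + ∑ k, C i k * W k := by
            rw [integral_add (μ := volume.restrict (Set.Ioc (0:ℝ) T)) (show IntegrableOn (fun _ : ℝ => B.mulVec (T⁻¹ • z) i) (Set.Ioc (0:ℝ) T) volume from
              integrableOn_const measure_Ioc_lt_top.ne) hintg]
            congr 1
            · rw [setIntegral_const, measureReal_def, hvol, smul_eq_mul]
            · rw [hsum_eq, integral_finset_sum _ fun k _ => (hint1 k).const_mul (C i k)]
              exact Finset.sum_congr rfl fun k _ => integral_const_mul _ _
          have h3 : T * (B.mulVec (T⁻¹ • z) i) = B.mulVec z i := by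
            rw [Matrix.mulVec_smul]
            simp only [Pi.smul_apply, smul_eq_mul]
            field_simp
          have h4 : ∑ k, C i k * W k = C.mulVec W i := rfl
          rw [h1, h2, h3, h4, hBz]
          simp only [Pi.add_apply, Pi.neg_apply, Pi.sub_apply]
          ring
        show eNorm ((x₀ + ∫ t in Set.Ioc (0:ℝ) T,
          (B.mulVec (T⁻¹ • z) + C.mulVec (w t))) - xgoal) ≤ ε
        rw [key]
        have hzero : x₀ + (xgoal - x₀) - xgoal = 0 := by abel
        rw [hzero, eNorm_zero']
        exact hε
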